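/- Let M be a topological group and X a compact zero-dimensional space with M ≤ Homeo(X) a subgroup with group topology. Then M is locally decomposable in the sense of inverse monoids (all restriction maps ρ_P : M → ∏_{e ∈ P} Me, m ↦ (me)_{e∈P}, for finite clopen partitions P are open) if and only if for every clopen partition P of X, the subgroup generated by the rigid stabilisers rist_M(e) for e ∈ P is open in M and carries the product topology. -/

import Mathlib

variable {X : Type*} [TopologicalSpace X]

/-- The group of self-homeomorphisms of `X` under composition. -/
instance : Group (X ≃ₜ X) where
  mul f g := g.trans f
  one := Homeomorph.refl X
  inv := Homeomorph.symm
  mul_assoc _ _ _ := Homeomorph.ext fun _ => rfl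
  one_mul _ := Homeomorph.ext fun _ => rfl
  mul_one _ := Homeomorph.ext fun _ => rfl
  inv_mul_cancel a := Homeomorph.ext fun x => a.symm_apply_apply x

/-- The restriction map of elements of `M` to the subset `α`, landing in functions `α → X`;
its range, with the coinduced (quotient) topology, is the space `Mα` of restrictions. -/
def resQ (M : Subgroup (X ≃ₜ X)) (α : Set X) : M → (α → X) :=
  fun g x => (g : X ≃ₜ X) x

/-- The rigid stabiliser of `Y` in `M`, as a subgroup of `M`. -/
def ristIn (M : Subgroup (X ≃ₜ X)) (Y : Set X) : Subgroup M where
  carrier := {g | ∀ x ∉ Y, (g : X ≃ₜ X) x = x}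
  one_mem' := fun _ _ => rfl
  mul_mem' := fun {a b} ha hb x hx => by
    show (a : X ≃ₜ X) ((b : X ≃ₜ X) x) = x
    rw [hb x hx, ha x hx]
  inv_mem' := fun {a} ha x hx => by
    show (a : X ≃ₜ X).symm x = x
    conv_lhs => rw [← ha x hx]
    exact (a : X ≃ₜ X).symm_apply_apply x

section Helpers

variable {M : Subgroup (X ≃ₜ X)}

theorem homeo_mul_apply (f g : X ≃ₜ X) (x : X) : (f * g) x = f (g x) := rfl

theorem homeo_inv_apply_apply (f : X ≃ₜ X) (x : X) : f⁻¹ (f x) = x :=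
  f.symm_apply_apply x

theorem ristIn_fix {s : Set X} {g : M} (hg : g ∈ ristIn M s) {x : X} (hx : x ∉ s) :
    (g : X ≃ₜ X) x = x := hg x hx

theorem ristIn_apply_mem {s : Set X} {g : M} (hg : g ∈ ristIn M s) {x : X} (hx : x ∈ s) :
    (g : X ≃ₜ X) x ∈ s := by
  by_contra h
  have h2 : ((g⁻¹ : M) : X ≃ₜ X) ((g : X ≃ₜ X) x) = (g : X ≃ₜ X) x :=
    ristIn_fix ((ristIn M s).inv_mem hg) h
  rw [show ((g⁻¹ : M) : X ≃ₜ X) = ((g : M) : X ≃ₜ X)⁻¹ from rfl,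
    homeo_inv_apply_apply] at h2
  exact h (h2 ▸ hx)

theorem list_prod_fix : ∀ (l : List M) (x : X), (∀ g ∈ l, (g : X ≃ₜ X) x = x) →
    ((l.prod : M) : X ≃ₜ X) x = x
  | [], _, _ => rfl
  | a :: l, x, h => by
    have hl := list_prod_fix l x fun g hg => h g (List.mem_cons_of_mem _ hg)
    rw [List.prod_cons, MulMemClass.coe_mul, homeo_mul_apply, hl,
      h a List.mem_cons_self]

theorem prod_ofFn_apply_of_mem :
    ∀ {n : ℕ} {α : Fin n → Set X}, Pairwise (Function.onFun Disjoint α) →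
    ∀ (u : ∀ i, ristIn M (α i)) (i : Fin n) {x : X}, x ∈ α i →
    (((List.ofFn fun j => ((u j : M))).prod : M) : X ≃ₜ X) x = ((u i : M) : X ≃ₜ X) x := by
  intro n
  induction n with
  | zero => intro α _ u i; exact i.elim0
  | succ n ih =>
    intro α hdisj u i x hx
    have hdisj' : Pairwise (Function.onFun Disjoint (α ∘ Fin.succ)) :=
      fun i j hij => hdisj ((Fin.succ_injective n).ne hij)
    rw [List.ofFn_succ, List.prod_cons, MulMemClass.coe_mul, homeo_mul_apply]
    rcases Fin.eq_zero_or_eq_succ i with rfl | ⟨j, rfl⟩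
    · have : (((List.ofFn fun j : Fin n => ((u j.succ : M))).prod : M) : X ≃ₜ X) x = x := by
        apply list_prod_fix
        intro g hg
        obtain ⟨k, hk⟩ := List.mem_ofFn.1 hg
        subst hk
        refine ristIn_fix (u k.succ).2 fun hxk => ?_
        exact Set.disjoint_left.1 (hdisj (Fin.succ_ne_zero k)) hxk hx
      rw [this]
    · have h1 := ih hdisj' (fun k => u k.succ) j hx
      rw [h1]
      refine ristIn_fix (u 0).2 fun hx0 => ?_
      have hmem : ((u j.succ : M) : X ≃ₜ X) x ∈ α j.succ :=
        ristIn_apply_mem (u j.succ).2 hx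
      exact Set.disjoint_left.1 (hdisj (Fin.succ_ne_zero j).symm) hx0 hmem

end Helpers
section Helpers2

variable {M : Subgroup (X ≃ₜ X)}

theorem prod_ofFn_one {n : ℕ} {α : Fin n → Set X} :
    (List.ofFn fun i => (((1 : ∀ i, ristIn M (α i)) i : M))).prod = 1 := by
  apply List.prod_eq_one
  intro g hg
  obtain ⟨i, hi⟩ := List.mem_ofFn.1 hg
  subst hi
  simp

theorem prod_ofFn_injective {n : ℕ} {α : Fin n → Set X}
    (hdisj : Pairwise (Function.onFun Disjoint α)) (hcover : (⋃ i, α i) = Set.univ) :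
    Function.Injective
      (fun f : (∀ i, ristIn M (α i)) => (List.ofFn fun i => ((f i : M))).prod) := by
  intro f g hfg
  funext i
  apply Subtype.ext
  apply Subtype.ext
  apply Homeomorph.ext
  intro x
  by_cases hx : x ∈ α i
  · have h1 := prod_ofFn_apply_of_mem hdisj f i hx
    have h2 := prod_ofFn_apply_of_mem hdisj g i hx
    rw [← h1, ← h2]
    exact congrFun (congrArg _ (congrArg Subtype.val hfg)) x
  · rw [ristIn_fix (f i).2 hx, ristIn_fix (g i).2 hx]

theorem continuous_prod_ofFn {Y : Type*} [TopologicalSpace Y] [TopologicalSpace M]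
    [IsTopologicalGroup M] :
    ∀ {n : ℕ} (F : Fin n → Y → M), (∀ i, Continuous (F i)) →
      Continuous fun y => (List.ofFn fun i => F i y).prod := by
  intro n
  induction n with
  | zero => intro F _; simpa using continuous_const
  | succ n ih =>
    intro F hF
    have : (fun y => (List.ofFn fun i => F i y).prod)
        = fun y => F 0 y * (List.ofFn fun i : Fin n => F i.succ y).prod := by
      funext y; rw [List.ofFn_succ, List.prod_cons]
    rw [this]
    exact (hF 0).mul (ih _ fun i => hF i.succ)

theorem exists_box {ι : Type*} [Finite ι] {π : ι → Type*} [∀ i, TopologicalSpace (π i)]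
    {s : Set (∀ i, π i)} (hs : IsOpen s) {f : ∀ i, π i} (hf : f ∈ s) :
    ∃ u : ∀ i, Set (π i), (∀ i, IsOpen (u i)) ∧ (∀ i, f i ∈ u i) ∧ Set.pi Set.univ u ⊆ s := by
  classical
  obtain ⟨I, u, hu, hsub⟩ := isOpen_pi_iff.1 hs f hf
  refine ⟨fun i => if h : i ∈ I then u i else Set.univ, fun i => ?_, fun i => ?_, ?_⟩
  · by_cases h : i ∈ I <;> simp [h, (hu _ · |>.1)]
  · by_cases h : i ∈ I <;> simp [h, (hu _ · |>.2)]
  · intro x hx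
    apply hsub
    intro i hi
    have h2 := hx i (Set.mem_univ i)
    simpa [Finset.mem_coe.1 hi] using h2

theorem exists_isClopen_between [CompactSpace X] [T2Space X] [TotallyDisconnectedSpace X]
    {K U : Set X} (hK : IsCompact K) (hU : IsOpen U) (hKU : K ⊆ U) :
    ∃ Z, IsClopen Z ∧ K ⊆ Z ∧ Z ⊆ U := by
  choose V hV hxV hVU using fun x : K => compact_exists_isClopen_in_isOpen hU (hKU x.2)
  obtain ⟨t, ht⟩ := hK.elim_finite_subcover V (fun x => (hV x).2)
    (fun x hx => Set.mem_iUnion.2 ⟨⟨x, hx⟩, hxV ⟨x, hx⟩⟩)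
  exact ⟨⋃ x ∈ t, V x, isClopen_biUnion_finset fun x _ => hV x, ht,
    Set.iUnion₂_subset fun x _ => hVU x⟩

end Helpers2
section Main

variable {M : Subgroup (X ≃ₜ X)} [TopologicalSpace M] [IsTopologicalGroup M]

theorem rho_apply_eq_iff {s : Set X} {g h : M} :
    Set.rangeFactorization (resQ M s) g = Set.rangeFactorization (resQ M s) h ↔
      ∀ x ∈ s, (g : X ≃ₜ X) x = (h : X ≃ₜ X) x := by
  rw [Subtype.ext_iff]
  show resQ M s g = resQ M s h ↔ _
  constructor
  · intro e x hx
    exact congrFun e ⟨x, hx⟩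
  · intro e
    funext x
    exact e x x.2

theorem isOpenMap_prod_ofFn {n : ℕ} {α : Fin n → Set X}
    (hdisj : Pairwise (Function.onFun Disjoint α)) (hcover : (⋃ i, α i) = Set.univ)
    (hρ : letI : ∀ i, TopologicalSpace ↥(Set.range (resQ M (α i))) := fun i =>
        TopologicalSpace.coinduced (Set.rangeFactorization (resQ M (α i))) inferInstance
      IsOpenMap fun (g : M) (i : Fin n) => Set.rangeFactorization (resQ M (α i)) g) :
    IsOpenMap (fun f : (∀ i, ristIn M (α i)) => (List.ofFn fun i => ((f i : M))).prod) := by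
  classical
  letI : ∀ i, TopologicalSpace ↥(Set.range (resQ M (α i))) := fun i =>
    TopologicalSpace.coinduced (Set.rangeFactorization (resQ M (α i))) inferInstance
  set p : (∀ i, ristIn M (α i)) → M := fun f => (List.ofFn fun i => ((f i : M))).prod with hp
  have hmem_part : ∀ x : X, ∃ i, x ∈ α i := fun x =>
    Set.mem_iUnion.1 (hcover.symm ▸ Set.mem_univ x)
  have hcontρ : Continuous (fun (g : M) (i : Fin n) => Set.rangeFactorization (resQ M (α i)) g) :=
    continuous_pi fun i => continuous_coinduced_rng
  intro B hB
  rw [isOpen_iff_forall_mem_open]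
  rintro m ⟨f, hfB, rfl⟩
  obtain ⟨u, huo, hfu, husub⟩ := exists_box hB hfB
  choose W hWo hWu using fun i => isOpen_induced_iff.1 (huo i)
  have hfW : ∀ i, ((f i : M)) ∈ W i := fun i => by
    rw [← Set.mem_preimage, hWu i]; exact hfu i
  set Ω : Set M := ⋂ i, (fun g : M => (f i : M) * ((p f)⁻¹ * g)) ⁻¹' (W i) with hΩ
  have hΩo : IsOpen Ω := isOpen_iInter_of_finite fun i =>
    (hWo i).preimage (continuous_const.mul (continuous_const.mul continuous_id))
  have hmΩ : p f ∈ Ω := by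
    refine Set.mem_iInter.2 fun i => ?_
    simp only [Set.mem_preimage, inv_mul_cancel, mul_one]
    exact hfW i
  obtain ⟨T, hTo, hmT, hTsub⟩ := exists_box (hρ Ω hΩo) ⟨p f, hmΩ, rfl⟩
  refine ⟨(fun (g : M) (i : Fin n) => Set.rangeFactorization (resQ M (α i)) g) ⁻¹'
      Set.pi Set.univ T, ?_, hcontρ.isOpen_preimage _ (isOpen_set_pi Set.finite_univ
      fun i _ => hTo i), fun i _ => hmT i⟩
  intro h hh
  have hw : ∀ i : Fin n, ∃ w : M, w ∈ Ω ∧ (∀ x ∈ α i, (w : X ≃ₜ X) x = (h : X ≃ₜ X) x) ∧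
      (∀ j, j ≠ i → ∀ x ∈ α j, (w : X ≃ₜ X) x = ((p f : M) : X ≃ₜ X) x) := by
    intro i
    have htuple : (fun j => if j = i then Set.rangeFactorization (resQ M (α j)) h
        else Set.rangeFactorization (resQ M (α j)) (p f)) ∈ Set.pi Set.univ T := by
      intro j _
      by_cases hji : j = i
      · simpa only [if_pos hji] using hh j (Set.mem_univ j)
      · simpa only [if_neg hji] using hmT j
    obtain ⟨w, hwΩ, hweq⟩ := hTsub htuple
    refine ⟨w, hwΩ, ?_, ?_⟩
    · have h0 := congrFun hweq i
      rw [if_pos rfl] at h0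
      exact fun x hx => (rho_apply_eq_iff.1 h0) x hx
    · intro j hji x hx
      have h0 := congrFun hweq j
      rw [if_neg hji] at h0
      exact (rho_apply_eq_iff.1 h0) x hx
  choose w hwΩ hwh hwm using hw
  have hv : ∀ i, ((p f)⁻¹ * w i) ∈ ristIn M (α i) := by
    intro i x hx
    obtain ⟨j, hj⟩ := hmem_part x
    have hji : j ≠ i := fun e => hx (e ▸ hj)
    show (((p f)⁻¹ * w i : M) : X ≃ₜ X) x = x
    rw [MulMemClass.coe_mul, homeo_mul_apply, hwm i j hji x hj]
    exact homeo_inv_apply_apply ((p f : M) : X ≃ₜ X) x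
  refine ⟨fun i => (f i) * ⟨(p f)⁻¹ * w i, hv i⟩, husub fun i _ => ?_, ?_⟩
  · rw [← hWu i]
    show ((f i : M) * ((p f)⁻¹ * w i)) ∈ W i
    exact Set.mem_iInter.1 (hwΩ i) i
  · apply Subtype.ext
    apply Homeomorph.ext
    intro x
    obtain ⟨i, hi⟩ := hmem_part x
    have h1 := prod_ofFn_apply_of_mem (M := M) hdisj
      (fun i => (f i) * ⟨(p f)⁻¹ * w i, hv i⟩) i hi
    set y : X := (((p f)⁻¹ * w i : M) : X ≃ₜ X) x with hy
    have hyi : y ∈ α i := ristIn_apply_mem (hv i) hi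
    have h2 : ((p f : M) : X ≃ₜ X) y = (h : X ≃ₜ X) x := by
      rw [hy]
      show ((p f : M) : X ≃ₜ X) ((((p f)⁻¹ : M) : X ≃ₜ X) (((w i : M) : X ≃ₜ X) x)) = _
      rw [hwh i x hi]
      exact ((p f : M) : X ≃ₜ X).apply_symm_apply _
    have h3 := prod_ofFn_apply_of_mem (M := M) hdisj f i hyi
    show ((p (fun i => (f i) * ⟨(p f)⁻¹ * w i, hv i⟩) : M) : X ≃ₜ X) x = (h : X ≃ₜ X) x
    rw [← h2]
    exact h1.trans h3.symm
end Main
section Back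

variable {M : Subgroup (X ≃ₜ X)} [TopologicalSpace M] [IsTopologicalGroup M]

theorem isOpenMap_rho {n : ℕ} {α : Fin n → Set X}
    (hdisj : Pairwise (Function.onFun Disjoint α)) (hcover : (⋃ i, α i) = Set.univ)
    (hpc : Continuous (fun f : (∀ i, ristIn M (α i)) => (List.ofFn fun i => ((f i : M))).prod))
    (hpo : IsOpenMap (fun f : (∀ i, ristIn M (α i)) => (List.ofFn fun i => ((f i : M))).prod)) :
    letI : ∀ i, TopologicalSpace ↥(Set.range (resQ M (α i))) := fun i =>
        TopologicalSpace.coinduced (Set.rangeFactorization (resQ M (α i))) inferInstance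
    IsOpenMap fun (g : M) (i : Fin n) => Set.rangeFactorization (resQ M (α i)) g := by
  classical
  letI : ∀ i, TopologicalSpace ↥(Set.range (resQ M (α i))) := fun i =>
    TopologicalSpace.coinduced (Set.rangeFactorization (resQ M (α i))) inferInstance
  set p : (∀ i, ristIn M (α i)) → M := fun f => (List.ofFn fun i => ((f i : M))).prod with hp
  have hmem_part : ∀ x : X, ∃ i, x ∈ α i := fun x =>
    Set.mem_iUnion.1 (hcover.symm ▸ Set.mem_univ x)
  have hp1 : p 1 = 1 := prod_ofFn_one
  have hsingle : ∀ (i : Fin n) (v : ristIn M (α i)), p (Pi.mulSingle i v) = (v : M) := by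
    intro i v
    apply Subtype.ext; apply Homeomorph.ext; intro x
    obtain ⟨j, hj⟩ := hmem_part x
    have h1 := prod_ofFn_apply_of_mem (M := M) hdisj (Pi.mulSingle i v) j hj
    by_cases hji : j = i
    · subst hji
      rw [Pi.mulSingle_eq_same] at h1
      exact h1
    · rw [Pi.mulSingle_eq_of_ne hji] at h1
      have hvx : ((v : M) : X ≃ₜ X) x = x :=
        ristIn_fix v.2 (Set.disjoint_left.1 (hdisj hji) hj)
      exact h1.trans hvx.symm
  intro O hO
  rw [isOpen_iff_forall_mem_open]
  rintro t0 ⟨g, hgO, rfl⟩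
  have hDo : IsOpen ((fun u : ∀ i, ristIn M (α i) => g * p u) ⁻¹' O) :=
    hO.preimage (continuous_const.mul hpc)
  have h1D : (1 : ∀ i, ristIn M (α i)) ∈ (fun u : ∀ i, ristIn M (α i) => g * p u) ⁻¹' O := by
    show g * p 1 ∈ O
    rw [hp1, mul_one]; exact hgO
  obtain ⟨u, huo, h1u, husub⟩ := exists_box hDo h1D
  set S : ∀ i, Set ↥(Set.range (resQ M (α i))) := fun i =>
    (fun v : ristIn M (α i) => Set.rangeFactorization (resQ M (α i)) (g * (v : M))) '' (u i)
    with hS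
  refine ⟨Set.pi Set.univ S, ?_, ?_, ?_⟩
  · -- Set.pi univ S ⊆ ρ '' O
    intro s hs
    have hs' : ∀ i, ∃ v : ristIn M (α i), v ∈ u i ∧
        Set.rangeFactorization (resQ M (α i)) (g * (v : M)) = s i := fun i => by
      obtain ⟨v, hv1, hv2⟩ := hs i (Set.mem_univ i)
      exact ⟨v, hv1, hv2⟩
    choose v hvu hveq using hs'
    refine ⟨g * p v, husub fun i _ => hvu i, ?_⟩
    funext i
    show Set.rangeFactorization (resQ M (α i)) (g * p v) = s i
    rw [← hveq i]
    apply Subtype.ext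
    show resQ M (α i) (g * p v) = resQ M (α i) (g * (v i : M))
    funext x
    show ((g * p v : M) : X ≃ₜ X) x.1 = ((g * (v i : M) : M) : X ≃ₜ X) x.1
    rw [MulMemClass.coe_mul, MulMemClass.coe_mul, homeo_mul_apply, homeo_mul_apply]
    congr 1
    exact prod_ofFn_apply_of_mem (M := M) hdisj v i x.2
  · -- openness
    refine isOpen_set_pi Set.finite_univ fun i _ => ?_
    rw [isOpen_coinduced]
    have hBio : IsOpen ((fun w : ∀ j, ristIn M (α j) => w i) ⁻¹' (u i)) :=
      (huo i).preimage (continuous_apply i)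
    have hdecomp : Set.rangeFactorization (resQ M (α i)) ⁻¹' (S i) =
        ⋃ (t : M) (_ : ∀ x ∈ α i, (t : X ≃ₜ X) x = x),
          (fun h : M => h * t) '' ((fun m : M => g * m) ''
            (p '' ((fun w : ∀ j, ristIn M (α j) => w i) ⁻¹' (u i)))) := by
      ext h
      constructor
      · intro hh
        obtain ⟨v, hvu, hveq⟩ := hh
        have hpt : ∀ x ∈ α i, ((g * (v : M) : M) : X ≃ₜ X) x = (h : X ≃ₜ X) x :=
          rho_apply_eq_iff.1 hveq
        refine Set.mem_iUnion.2 ⟨(g * (v : M))⁻¹ * h, Set.mem_iUnion.2 ⟨?_, ?_⟩⟩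
        · intro x hx
          show (((g * (v : M))⁻¹ * h : M) : X ≃ₜ X) x = x
          rw [MulMemClass.coe_mul, homeo_mul_apply, ← hpt x hx]
          exact homeo_inv_apply_apply _ x
        · refine ⟨g * p (Pi.mulSingle (M := fun j => ↥(ristIn M (α j))) i v),
            ⟨p (Pi.mulSingle (M := fun j => ↥(ristIn M (α j))) i v),
            ⟨Pi.mulSingle (M := fun j => ↥(ristIn M (α j))) i v, ?_, rfl⟩, rfl⟩, ?_⟩
          · show Pi.mulSingle (M := fun j => ↥(ristIn M (α j))) i v i ∈ u i
            rw [Pi.mulSingle_eq_same]; exact hvu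
          · show g * p (Pi.mulSingle (M := fun j => ↥(ristIn M (α j))) i v) *
              ((g * (v : M))⁻¹ * h) = h
            rw [hsingle i v, mul_inv_cancel_left]
      · intro hh
        obtain ⟨t, ht'⟩ := Set.mem_iUnion.1 hh
        obtain ⟨ht, hh2⟩ := Set.mem_iUnion.1 ht'
        obtain ⟨m1, ⟨m2, ⟨w, hwB, rfl⟩, rfl⟩, rfl⟩ := hh2
        refine ⟨w i, hwB, ?_⟩
        apply rho_apply_eq_iff.2
        intro x hx
        show ((g * (w i : M) : M) : X ≃ₜ X) x = ((g * p w * t : M) : X ≃ₜ X) x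
        rw [MulMemClass.coe_mul, MulMemClass.coe_mul, MulMemClass.coe_mul,
          homeo_mul_apply, homeo_mul_apply, homeo_mul_apply, ht x hx]
        congr 1
        exact (prod_ofFn_apply_of_mem (M := M) hdisj w i hx).symm
      -- done ext
    rw [hdecomp]
    refine isOpen_iUnion fun t => isOpen_iUnion fun ht => ?_
    exact (Homeomorph.mulRight t).isOpenMap _
      ((Homeomorph.mulLeft g).isOpenMap _ (hpo _ hBio))
  · -- membership
    intro i _
    refine ⟨1, h1u i, ?_⟩
    show Set.rangeFactorization (resQ M (α i)) (g * ((1 : ristIn M (α i)) : M)) =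
      Set.rangeFactorization (resQ M (α i)) g
    rw [OneMemClass.coe_one, mul_one]

end Back
section Cont

variable [CompactSpace X] [T2Space X] [TotallyDisconnectedSpace X]
variable {M : Subgroup (X ≃ₜ X)} [TopologicalSpace M] [IsTopologicalGroup M]

theorem continuous_toC
    (hR : ∀ (n : ℕ) (α : Fin n → Set X), (∀ i, IsClopen (α i)) →
      Pairwise (Function.onFun Disjoint α) → (⋃ i, α i) = Set.univ →
      Function.Injective
        (fun f : (∀ i, ristIn M (α i)) => (List.ofFn fun i => ((f i : M))).prod) ∧
      Continuous
        (fun f : (∀ i, ristIn M (α i)) => (List.ofFn fun i => ((f i : M))).prod) ∧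
      IsOpenMap
        (fun f : (∀ i, ristIn M (α i)) => (List.ofFn fun i => ((f i : M))).prod)) :
    Continuous fun g : M => (⟨⇑(g : X ≃ₜ X), (g : X ≃ₜ X).continuous⟩ : C(X, X)) := by
  rw [ContinuousMap.continuous_compactOpen]
  intro K hK U hU
  rw [isOpen_iff_forall_mem_open]
  intro g hg
  obtain ⟨Z, hZ, hKZ, hZU⟩ := exists_isClopen_between (hK.image (g : X ≃ₜ X).continuous) hU
    (Set.mapsTo_iff_image_subset.1 hg)
  set a : Set X := (g : X ≃ₜ X) ⁻¹' Z with ha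
  have haclo : IsClopen a := hZ.preimage (g : X ≃ₜ X).continuous
  have hKa : K ⊆ a := fun x hx => hKZ (Set.mem_image_of_mem _ hx)
  set α : Fin 2 → Set X := ![a, aᶜ] with hα
  have hαclo : ∀ i, IsClopen (α i) := by
    intro i
    fin_cases i
    · exact haclo
    · exact haclo.compl
  have hαdisj : Pairwise (Function.onFun Disjoint α) := by
    intro i j hij
    fin_cases i <;> fin_cases j
    · exact absurd rfl hij
    · exact disjoint_compl_right
    · exact disjoint_compl_left
    · exact absurd rfl hij
  have hαcover : (⋃ i, α i) = Set.univ := by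
    apply Set.eq_univ_of_forall
    intro x
    by_cases hx : x ∈ a
    · exact Set.mem_iUnion.2 ⟨0, hx⟩
    · exact Set.mem_iUnion.2 ⟨1, hx⟩
  obtain ⟨-, hpc, hpo⟩ := hR 2 α hαclo hαdisj hαcover
  set p : (∀ i, ristIn M (α i)) → M := fun f => (List.ofFn fun i => ((f i : M))).prod with hp
  have hp1 : p 1 = 1 := prod_ofFn_one
  refine ⟨(fun v : ∀ i, ristIn M (α i) => g * p v) '' Set.univ, ?_, ?_, ?_⟩
  · rintro h ⟨v, -, rfl⟩
    intro x hxK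
    show ((g * p v : M) : X ≃ₜ X) x ∈ U
    rw [MulMemClass.coe_mul, homeo_mul_apply]
    have hxa : x ∈ α 0 := hKa hxK
    have h1 : ((p v : M) : X ≃ₜ X) x = ((v 0 : M) : X ≃ₜ X) x :=
      prod_ofFn_apply_of_mem (M := M) hαdisj v 0 hxa
    rw [h1]
    have h2 : ((v 0 : M) : X ≃ₜ X) x ∈ α 0 := ristIn_apply_mem (v 0).2 hxa
    exact hZU h2
  · have himg : (fun v : ∀ i, ristIn M (α i) => g * p v) '' Set.univ
        = (fun m : M => g * m) '' (p '' Set.univ) := by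
      rw [Set.image_image]
    rw [himg]
    exact (Homeomorph.mulLeft g).isOpenMap _ (hpo _ isOpen_univ)
  · refine ⟨1, Set.mem_univ 1, ?_⟩
    show g * p 1 = g
    rw [hp1, mul_one]

end Cont

/-- **Local decomposability: inverse monoid sense versus group sense.**
Let `X` be a compact zero-dimensional space and `M ≤ Homeo(X)` a subgroup with a group
topology.  Then `M` is locally decomposable in the sense of inverse monoids (its topology
refines the compact-open topology and, for every finite clopen partition
`α : Fin n → Set X`, the restriction map `ρ : M → ∏ᵢ Mαᵢ`, `g ↦ (g|αᵢ)ᵢ` is open with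
respect to the quotient topologies on the spaces of restrictions `Mαᵢ`) if and only if for
every finite clopen partition the multiplication map from the direct product of the rigid
stabilisers `∏ᵢ rist_M(αᵢ)` to `M` is an injective continuous open map (so that the subgroup
they generate is open in `M` and carries the product topology). -/
theorem locallyDecomposable_monoid_iff_group
    [CompactSpace X] [T2Space X] [TotallyDisconnectedSpace X]
    (M : Subgroup (X ≃ₜ X)) [TopologicalSpace M] [IsTopologicalGroup M] :
    ((Continuous fun g : M => (⟨⇑(g : X ≃ₜ X), (g : X ≃ₜ X).continuous⟩ : C(X, X))) ∧
     (Continuous fun g : M =>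
        (⟨⇑((g : X ≃ₜ X).symm), (g : X ≃ₜ X).symm.continuous⟩ : C(X, X))) ∧
     (∀ (n : ℕ) (α : Fin n → Set X), (∀ i, IsClopen (α i)) →
       Pairwise (Function.onFun Disjoint α) → (⋃ i, α i) = Set.univ →
       letI : ∀ i, TopologicalSpace ↥(Set.range (resQ M (α i))) := fun i =>
         TopologicalSpace.coinduced (Set.rangeFactorization (resQ M (α i))) inferInstance
       IsOpenMap fun (g : M) (i : Fin n) => Set.rangeFactorization (resQ M (α i)) g))
    ↔
    (∀ (n : ℕ) (α : Fin n → Set X), (∀ i, IsClopen (α i)) →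
      Pairwise (Function.onFun Disjoint α) → (⋃ i, α i) = Set.univ →
      Function.Injective
        (fun f : (∀ i, ristIn M (α i)) => (List.ofFn fun i => ((f i : M))).prod) ∧
      Continuous
        (fun f : (∀ i, ristIn M (α i)) => (List.ofFn fun i => ((f i : M))).prod) ∧
      IsOpenMap
        (fun f : (∀ i, ristIn M (α i)) => (List.ofFn fun i => ((f i : M))).prod)) := by
  constructor
  · rintro ⟨hc1, hc2, hρ⟩
    intro n α hclo hdisj hcover
    exact ⟨prod_ofFn_injective hdisj hcover,
      continuous_prod_ofFn (fun i (f : ∀ i, ristIn M (α i)) => ((f i : M)))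
        (fun i => continuous_subtype_val.comp (continuous_apply i)),
      isOpenMap_prod_ofFn hdisj hcover (hρ n α hclo hdisj hcover)⟩
  · intro hR
    refine ⟨continuous_toC hR, ?_, ?_⟩
    · have h1 := continuous_toC hR
      have heq : (fun g : M =>
            (⟨⇑((g : X ≃ₜ X).symm), (g : X ≃ₜ X).symm.continuous⟩ : C(X, X)))
          = (fun g : M => (⟨⇑(g : X ≃ₜ X), (g : X ≃ₜ X).continuous⟩ : C(X, X)))
              ∘ (fun g : M => g⁻¹) := by
        funext g
        rfl
      rw [heq]
      exact h1.comp continuous_inv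
    · intro n α hclo hdisj hcover
      obtain ⟨hinj, hpc, hpo⟩ := hR n α hclo hdisj hcover
      exact isOpenMap_rho hdisj hcover hpc hpo
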